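/- Let G be an amenable group. Let E and Y be real Banach spaces with bounded representations u and v of G by invertible operators (u(g⁻¹) = u(g)⁻¹, v(g⁻¹) = v(g)⁻¹), let X be a closed subspace of E with u(g)X ⊆ X for all g ∈ G, and assume X (with the restricted representation g ↦ u(g)|_X) is G-complemented in its bidual. Let Ω : Y → E be any map and let d₁, d₂ be two derivations (dᵢ(gh) = u(g)∘dᵢ(h) + dᵢ(g)∘v(h), each dᵢ(g) : Y → E linear) both compatible with Ω: there is C ≥ 0 such that for i = 1,2, all g ∈ G and y ∈ Y, u(g)(Ωy) − Ω(v(g)y) + dᵢ(g)y ∈ X and ‖u(g)(Ωy) − Ω(v(g)y) + dᵢ(g)y‖ ≤ C‖y‖. Then the two compatible actions are conjugate by a bounded perturbation: there exists a bounded linear operator A : Y → X such that d₁(g)y − d₂(g)y = u(g)(A y) − A(v(g) y) for all g ∈ G and y ∈ Y; equivalently, the triangular representations λᵢ(g)(x,y) = (u(g)x + dᵢ(g)y, v(g)y) satisfy λ₂(g) = S ∘ λ₁(g) ∘ S⁻¹ with S(x,y) = (x + A y, y). -/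

import Mathlib

open NormedSpace

/-- The subspace of bounded real-valued functions on `G` (the domain `ℓ∞(G,ℝ)` of a mean). -/
def bddFuns (G : Type*) : Submodule ℝ (G → ℝ) where
  carrier := {f | ∃ C : ℝ, ∀ g, |f g| ≤ C}
  add_mem' := by
    rintro f g ⟨C, hC⟩ ⟨D, hD⟩
    exact ⟨C + D, fun x => (abs_add_le _ _).trans (add_le_add (hC x) (hD x))⟩
  zero_mem' := ⟨0, fun g => by simp⟩
  smul_mem' := by
    rintro c f ⟨C, hC⟩
    exact ⟨|c| * C, fun x => by
      rw [Pi.smul_apply, smul_eq_mul, abs_mul]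
      exact mul_le_mul_of_nonneg_left (hC x) (abs_nonneg c)⟩

def oneBdd (G : Type*) : bddFuns G := ⟨fun _ => 1, 1, fun _ => by norm_num⟩

lemma mean_of_const {G : Type*} (m : bddFuns G →ₗ[ℝ] ℝ)
    (hm1 : ∀ f : bddFuns G, (∀ g : G, (f : G → ℝ) g = 1) → m f = 1)
    (f : bddFuns G) (c : ℝ) (hf : ∀ g, (f : G → ℝ) g = c) : m f = c := by
  have h1 : m (oneBdd G) = 1 := hm1 _ (fun g => rfl)
  have hfe : f = c • oneBdd G := by
    apply Subtype.ext; funext g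
    have : ((c • oneBdd G : bddFuns G) : G → ℝ) g = c := by
      simp [oneBdd]
    rw [this, hf g]
  rw [hfe, map_smul, h1, smul_eq_mul, mul_one]

lemma mean_abs_le {G : Type*} (m : bddFuns G →ₗ[ℝ] ℝ)
    (hm1 : ∀ f : bddFuns G, (∀ g : G, (f : G → ℝ) g = 1) → m f = 1)
    (hmpos : ∀ f : bddFuns G, (∀ g : G, 0 ≤ (f : G → ℝ) g) → 0 ≤ m f)
    (f : bddFuns G) (B : ℝ) (hB : ∀ g, |(f : G → ℝ) g| ≤ B) : |m f| ≤ B := by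
  have h1 : m (oneBdd G) = 1 := hm1 _ (fun g => rfl)
  have hub : m f ≤ B := by
    have h0 : 0 ≤ m (B • oneBdd G - f) := by
      apply hmpos
      intro g
      have h2 := (abs_le.mp (hB g)).2
      have h3 : ((B • oneBdd G - f : bddFuns G) : G → ℝ) g
          = B - (f : G → ℝ) g := by
        simp [oneBdd]
      rw [h3]; linarith
    have h4 : m (B • oneBdd G - f) = B - m f := by
      rw [map_sub, map_smul, h1, smul_eq_mul, mul_one]
    linarith
  have hlb : -B ≤ m f := by
    have h0 : 0 ≤ m (B • oneBdd G + f) := by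
      apply hmpos
      intro g
      have h2 := (abs_le.mp (hB g)).1
      have h3 : ((B • oneBdd G + f : bddFuns G) : G → ℝ) g
          = B + (f : G → ℝ) g := by
        simp [oneBdd]
      rw [h3]; linarith
    have h4 : m (B • oneBdd G + f) = B + m f := by
      rw [map_add, map_smul, h1, smul_eq_mul, mul_one]
    linarith
  exact abs_le.mpr ⟨hlb, hub⟩

set_option maxHeartbeats 1000000 in
/-- uniqueness of compatible actions: if `G` is amenable and `X` is
`G`-complemented in its bidual, then any two derivations `d₁, d₂` compatible with the
same quasi-linear map `Ω` differ by an inner derivation: `d₁(g) − d₂(g) = [u(g),A,v(g)]`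
for a bounded linear `A : Y → X`; equivalently the triangular representations are
conjugated by `S(x,y) = (x + Ay, y)`. -/
theorem stmt_18 {G : Type*} [Group G]
    {E Y : Type*} [NormedAddCommGroup E] [NormedSpace ℝ E] [CompleteSpace E]
    [NormedAddCommGroup Y] [NormedSpace ℝ Y] [CompleteSpace Y]
    -- amenability of G: existence of a left-invariant mean on ℓ∞(G,ℝ)
    (hamen : ∃ m : bddFuns G →ₗ[ℝ] ℝ,
      (∀ f : bddFuns G, (∀ g : G, (f : G → ℝ) g = 1) → m f = 1) ∧
      (∀ f : bddFuns G, (∀ g : G, 0 ≤ (f : G → ℝ) g) → 0 ≤ m f) ∧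
      (∀ (g₀ : G) (f f' : bddFuns G),
        (∀ g : G, (f' : G → ℝ) g = (f : G → ℝ) (g₀ * g)) → m f' = m f))
    -- bounded representations by invertible operators
    (u : G → E →L[ℝ] E) (v : G → Y →L[ℝ] Y)
    (hu : ∀ g h : G, u (g * h) = (u g).comp (u h))
    (hv : ∀ g h : G, v (g * h) = (v g).comp (v h))
    (huinv : ∀ g : G, (u g⁻¹).comp (u g) = ContinuousLinearMap.id ℝ E)
    (huinv' : ∀ g : G, (u g).comp (u g⁻¹) = ContinuousLinearMap.id ℝ E)
    (hvinv : ∀ g : G, (v g⁻¹).comp (v g) = ContinuousLinearMap.id ℝ Y)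
    (hvinv' : ∀ g : G, (v g).comp (v g⁻¹) = ContinuousLinearMap.id ℝ Y)
    (Mu : ℝ) (huM : ∀ g : G, ‖u g‖ ≤ Mu) (Mv : ℝ) (hvM : ∀ g : G, ‖v g‖ ≤ Mv)
    -- the closed invariant subspace X of E
    (X : Submodule ℝ E) (hXc : IsClosed (X : Set E))
    (hXinv : ∀ g : G, ∀ x ∈ X, u g x ∈ X)
    -- X (with the restricted representation) is G-complemented in its bidual
    (hcompl : ∃ P : StrongDual ℝ (StrongDual ℝ ↥X) →L[ℝ] ↥X,
      (∀ x : ↥X, P (inclusionInDoubleDual ℝ ↥X x) = x) ∧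
      ∀ (g : G) (wg : ↥X →L[ℝ] ↥X), (∀ x : ↥X, (wg x : E) = u g (x : E)) →
        ∀ wgss : StrongDual ℝ (StrongDual ℝ ↥X) →L[ℝ] StrongDual ℝ (StrongDual ℝ ↥X),
          (∀ (Φ : StrongDual ℝ (StrongDual ℝ ↥X)) (φ : StrongDual ℝ ↥X), wgss Φ φ = Φ (φ.comp wg)) →
          ∀ Φ : StrongDual ℝ (StrongDual ℝ ↥X), P (wgss Φ) = wg (P Φ))
    -- a quasi-linear map Ω and two compatible derivations d₁, d₂
    (Ω : Y → E) (d₁ d₂ : G → Y →ₗ[ℝ] E)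
    (hd₁ : ∀ (g h : G) (y : Y), d₁ (g * h) y = u g (d₁ h y) + d₁ g (v h y))
    (hd₂ : ∀ (g h : G) (y : Y), d₂ (g * h) y = u g (d₂ h y) + d₂ g (v h y))
    (C : ℝ) (hC : 0 ≤ C)
    (hcomp₁ : ∀ (g : G) (y : Y),
      u g (Ω y) - Ω (v g y) + d₁ g y ∈ X ∧
      ‖u g (Ω y) - Ω (v g y) + d₁ g y‖ ≤ C * ‖y‖)
    (hcomp₂ : ∀ (g : G) (y : Y),
      u g (Ω y) - Ω (v g y) + d₂ g y ∈ X ∧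
      ‖u g (Ω y) - Ω (v g y) + d₂ g y‖ ≤ C * ‖y‖) :
    ∃ A : Y →L[ℝ] E,
      (∀ y : Y, A y ∈ X) ∧
      (∀ (g : G) (y : Y), d₁ g y - d₂ g y = u g (A y) - A (v g y)) ∧
      (∀ (g : G) (x : E) (y : Y),
        u g x + d₁ g y + A (v g y) = u g (x + A y) + d₂ g y) := by
  classical
  letI iN : NormedAddCommGroup (StrongDual ℝ (StrongDual ℝ ↥X)) :=
    ContinuousLinearMap.toNormedAddCommGroup (E := StrongDual ℝ ↥X) (F := ℝ) (σ₁₂ := RingHom.id ℝ)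
  letI iS : NormedSpace ℝ (StrongDual ℝ (StrongDual ℝ ↥X)) :=
    ContinuousLinearMap.toNormedSpace (E := StrongDual ℝ ↥X) (F := ℝ) (σ₁₂ := RingHom.id ℝ)
  obtain ⟨m, hm1, hmpos, hminv⟩ := hamen
  obtain ⟨P, hPj, hPcomm⟩ := hcompl
  have hMu0 : 0 ≤ Mu := le_trans (norm_nonneg _) (huM 1)
  -- the difference of the two derivations
  set D : G → Y →ₗ[ℝ] E := fun g => d₁ g - d₂ g with hDdef
  have hDapp : ∀ g y, D g y = d₁ g y - d₂ g y := fun g y => rfl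
  have hDmem : ∀ g y, D g y ∈ X := by
    intro g y
    have h1 := (hcomp₁ g y).1
    have h2 := (hcomp₂ g y).1
    have he : D g y = (u g (Ω y) - Ω (v g y) + d₁ g y)
        - (u g (Ω y) - Ω (v g y) + d₂ g y) := by
      rw [hDapp]; abel
    rw [he]
    exact X.sub_mem h1 h2
  have hDnorm : ∀ g y, ‖D g y‖ ≤ 2 * C * ‖y‖ := by
    intro g y
    have he : D g y = (u g (Ω y) - Ω (v g y) + d₁ g y)
        - (u g (Ω y) - Ω (v g y) + d₂ g y) := by
      rw [hDapp]; abel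
    rw [he]
    calc ‖(u g (Ω y) - Ω (v g y) + d₁ g y) - (u g (Ω y) - Ω (v g y) + d₂ g y)‖
        ≤ ‖u g (Ω y) - Ω (v g y) + d₁ g y‖ + ‖u g (Ω y) - Ω (v g y) + d₂ g y‖ :=
          norm_sub_le _ _
      _ ≤ C * ‖y‖ + C * ‖y‖ := add_le_add (hcomp₁ g y).2 (hcomp₂ g y).2
      _ = 2 * C * ‖y‖ := by ring
  have hDder : ∀ g h y, D (g * h) y = u g (D h y) + D g (v h y) := by
    intro g h y
    rw [hDapp, hDapp, hDapp, hd₁, hd₂, map_sub]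
    abel
  -- u g (u g⁻¹ z) = z
  have huu : ∀ (g : G) (z : E), u g (u g⁻¹ z) = z := by
    intro g z
    have := DFunLike.congr_fun (huinv' g) z
    simpa using this
  -- the twisted cocycle, valued in X
  have hcXmem : ∀ g y, u g (D g⁻¹ y) ∈ X := fun g y => hXinv g _ (hDmem g⁻¹ y)
  set cX : G → Y → ↥X := fun g y => ⟨u g (D g⁻¹ y), hcXmem g y⟩ with hcXdef
  have hcXcoe : ∀ g y, (cX g y : E) = u g (D g⁻¹ y) := fun g y => rfl
  have hcXadd : ∀ g y y', cX g (y + y') = cX g y + cX g y' := by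
    intro g y y'
    apply Subtype.ext
    show u g (D g⁻¹ (y + y')) = u g (D g⁻¹ y) + u g (D g⁻¹ y')
    rw [map_add (D g⁻¹), map_add]
  have hcXsmul : ∀ (g : G) (c : ℝ) (y : Y), cX g (c • y) = c • cX g y := by
    intro g c y
    apply Subtype.ext
    show u g (D g⁻¹ (c • y)) = c • u g (D g⁻¹ y)
    rw [map_smul (D g⁻¹), map_smul]
  have hcXnorm : ∀ g y, ‖cX g y‖ ≤ Mu * (2 * C) * ‖y‖ := by
    intro g y
    have h1 : ‖cX g y‖ = ‖u g (D g⁻¹ y)‖ := rfl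
    rw [h1]
    calc ‖u g (D g⁻¹ y)‖ ≤ ‖u g‖ * ‖D g⁻¹ y‖ := (u g).le_opNorm _
      _ ≤ Mu * (2 * C * ‖y‖) :=
          mul_le_mul (huM g) (hDnorm g⁻¹ y) (norm_nonneg _) hMu0
      _ = Mu * (2 * C) * ‖y‖ := by ring
  -- bounded functions fed to the mean
  have hFb : ∀ (φ : StrongDual ℝ ↥X) (y : Y) (g : G),
      |φ (cX g y)| ≤ ‖φ‖ * (Mu * (2 * C) * ‖y‖) := by
    intro φ y g
    calc |φ (cX g y)| = ‖φ (cX g y)‖ := (Real.norm_eq_abs _).symm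
      _ ≤ ‖φ‖ * ‖cX g y‖ := φ.le_opNorm _
      _ ≤ ‖φ‖ * (Mu * (2 * C) * ‖y‖) :=
          mul_le_mul_of_nonneg_left (hcXnorm g y) (norm_nonneg φ)
  set F : StrongDual ℝ ↥X → Y → bddFuns G :=
    fun φ y => ⟨fun g => φ (cX g y), ‖φ‖ * (Mu * (2 * C) * ‖y‖), hFb φ y⟩ with hFdef
  have hFcoe : ∀ φ y g, ((F φ y : bddFuns G) : G → ℝ) g = φ (cX g y) := fun _ _ _ => rfl
  have hFbound : ∀ (φ : StrongDual ℝ ↥X) (y : Y),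
      |m (F φ y)| ≤ ‖φ‖ * (Mu * (2 * C) * ‖y‖) := by
    intro φ y
    exact mean_abs_le m hm1 hmpos (F φ y) _ (hFb φ y)
  -- the bidual-valued map
  set Φ₀ : Y → StrongDual ℝ (StrongDual ℝ ↥X) := fun y =>
    LinearMap.mkContinuous
      { toFun := fun φ => m (F φ y)
        map_add' := by
          intro φ ψ
          have he : F (φ + ψ) y = F φ y + F ψ y := by
            apply Subtype.ext; funext g
            show (φ + ψ) (cX g y) = φ (cX g y) + ψ (cX g y)
            simp
          show m (F (φ + ψ) y) = m (F φ y) + m (F ψ y)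
          rw [he, map_add]
        map_smul' := by
          intro c φ
          have he : F (c • φ) y = c • F φ y := by
            apply Subtype.ext; funext g
            show (c • φ) (cX g y) = c • φ (cX g y)
            simp
          show m (F (c • φ) y) = c • m (F φ y)
          rw [he, map_smul] }
      (Mu * (2 * C) * ‖y‖)
      (by
        intro φ
        rw [Real.norm_eq_abs]
        calc |m (F φ y)| ≤ ‖φ‖ * (Mu * (2 * C) * ‖y‖) := hFbound φ y
          _ = Mu * (2 * C) * ‖y‖ * ‖φ‖ := by ring) with hΦ₀def
  have hΦ₀apply : ∀ y φ, Φ₀ y φ = m (F φ y) := fun y φ => rfl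
  have hΦ₀norm : ∀ y, ‖Φ₀ y‖ ≤ Mu * (2 * C) * ‖y‖ := by
    intro y
    rw [hΦ₀def]
    exact LinearMap.mkContinuous_norm_le _
      (mul_nonneg (mul_nonneg hMu0 (by linarith)) (norm_nonneg y)) _
  set Φ : Y →L[ℝ] StrongDual ℝ (StrongDual ℝ ↥X) :=
    LinearMap.mkContinuous
      { toFun := Φ₀
        map_add' := by
          intro y y'
          ext φ
          have he : F φ (y + y') = F φ y + F φ y' := by
            apply Subtype.ext; funext g
            show φ (cX g (y + y')) = φ (cX g y) + φ (cX g y')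
            rw [hcXadd, map_add]
          show Φ₀ (y + y') φ = Φ₀ y φ + Φ₀ y' φ
          rw [hΦ₀apply, hΦ₀apply, hΦ₀apply, he, map_add]
        map_smul' := by
          intro c y
          ext φ
          have he : F φ (c • y) = c • F φ y := by
            apply Subtype.ext; funext g
            show φ (cX g (c • y)) = c • φ (cX g y)
            rw [hcXsmul, map_smul]
          show Φ₀ (c • y) φ = c • Φ₀ y φ
          rw [hΦ₀apply, hΦ₀apply, he, map_smul] }
      (Mu * (2 * C))
      (by
        intro y
        calc ‖Φ₀ y‖ ≤ Mu * (2 * C) * ‖y‖ := hΦ₀norm y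
          _ = Mu * (2 * C) * ‖y‖ := rfl) with hΦdef
  have hΦapply : ∀ y φ, Φ y φ = m (F φ y) := fun y φ => rfl
  -- the operator A
  set A : Y →L[ℝ] E := X.subtypeL.comp (P.comp Φ) with hAdef
  have hAapply : ∀ y, A y = ((P (Φ y) : ↥X) : E) := fun y => rfl
  have hAmem : ∀ y, A y ∈ X := fun y => (P (Φ y)).2
  -- the key identity
  have hkey : ∀ (g₀ : G) (y : Y), A (v g₀ y) = u g₀ (A y) - D g₀ y := by
    intro g₀ y
    set wg : ↥X →L[ℝ] ↥X :=
      ((u g₀).comp X.subtypeL).codRestrict X (fun x => hXinv g₀ _ x.2) with hwgdef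
    have hwg : ∀ x : ↥X, (wg x : E) = u g₀ (x : E) := fun x => rfl
    set pre : StrongDual ℝ ↥X →L[ℝ] StrongDual ℝ ↥X :=
      (ContinuousLinearMap.compL ℝ ↥X ↥X ℝ).flip wg with hpredef
    have hpre : ∀ φ : StrongDual ℝ ↥X, pre φ = φ.comp wg := fun φ => rfl
    set wgss : StrongDual ℝ (StrongDual ℝ ↥X) →L[ℝ] StrongDual ℝ (StrongDual ℝ ↥X) :=
      (ContinuousLinearMap.compL ℝ (StrongDual ℝ ↥X) (StrongDual ℝ ↥X) ℝ).flip pre with hwgssdef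
    have hwgss : ∀ (Φ' : StrongDual ℝ (StrongDual ℝ ↥X)) (φ : StrongDual ℝ ↥X),
        wgss Φ' φ = Φ' (φ.comp wg) := fun Φ' φ => rfl
    set dx : ↥X := ⟨D g₀ y, hDmem g₀ y⟩ with hdxdef
    -- the cocycle computation at the level of E
    have hE : ∀ g : G, (cX g (v g₀ y) : E) = u g₀ ((cX (g₀⁻¹ * g) y : E)) - D g₀ y := by
      intro g
      have h1 : D (g⁻¹ * g₀) y = u g⁻¹ (D g₀ y) + D g⁻¹ (v g₀ y) := hDder g⁻¹ g₀ y
      have h2 : D g⁻¹ (v g₀ y) = D (g⁻¹ * g₀) y - u g⁻¹ (D g₀ y) := by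
        rw [h1]; abel
      rw [hcXcoe, hcXcoe, h2, map_sub, huu g (D g₀ y)]
      congr 1
      have h3 : (g₀⁻¹ * g)⁻¹ = g⁻¹ * g₀ := by rw [mul_inv_rev, inv_inv]
      have h4 : g₀ * (g₀⁻¹ * g) = g := by rw [mul_inv_cancel_left]
      have h5 := DFunLike.congr_fun (hu g₀ (g₀⁻¹ * g)) (D (g₀⁻¹ * g)⁻¹ y)
      rw [h4] at h5
      rw [h3] at h5
      simpa using h5
    have hXlevel : ∀ g : G, cX g (v g₀ y) = wg (cX (g₀⁻¹ * g) y) - dx := by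
      intro g
      apply Subtype.ext
      rw [Submodule.coe_sub, hwg]
      exact hE g
    -- the mean-level identity
    have hΦshift : Φ (v g₀ y) = wgss (Φ y) - inclusionInDoubleDual ℝ ↥X dx := by
      ext φ
      set ψ : StrongDual ℝ ↥X := φ.comp wg with hψdef
      have hmemsh : (fun g => ψ (cX (g₀⁻¹ * g) y)) ∈ bddFuns G :=
        ⟨‖ψ‖ * (Mu * (2 * C) * ‖y‖), fun g => hFb ψ y (g₀⁻¹ * g)⟩
      set fsh : bddFuns G := ⟨fun g => ψ (cX (g₀⁻¹ * g) y), hmemsh⟩ with hfshdef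
      have hmemc : (fun _ : G => φ dx) ∈ bddFuns G := ⟨|φ dx|, fun _ => le_rfl⟩
      set cf : bddFuns G := ⟨fun _ => φ dx, hmemc⟩ with hcfdef
      have he : F φ (v g₀ y) = fsh - cf := by
        apply Subtype.ext; funext g
        show φ (cX g (v g₀ y)) = ψ (cX (g₀⁻¹ * g) y) - φ dx
        rw [hXlevel g, map_sub]
        rfl
      have hsh : m fsh = m (F ψ y) :=
        hminv g₀⁻¹ (F ψ y) fsh (fun g => rfl)
      have hcf : m cf = φ dx := mean_of_const m hm1 cf (φ dx) (fun g => rfl)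
      show Φ (v g₀ y) φ = (wgss (Φ y) - inclusionInDoubleDual ℝ ↥X dx) φ
      rw [ContinuousLinearMap.sub_apply, hwgss]
      have hj : (inclusionInDoubleDual ℝ ↥X dx) φ = φ dx := rfl
      rw [hj, hΦapply, he, map_sub, hsh, hcf, ← hψdef, ← hΦapply]
    -- apply the projection
    have hP1 : P (wgss (Φ y)) = wg (P (Φ y)) := hPcomm g₀ wg hwg wgss hwgss (Φ y)
    have hP2 : P (inclusionInDoubleDual ℝ ↥X dx) = dx := hPj dx
    have hPfin : P (Φ (v g₀ y)) = wg (P (Φ y)) - dx := by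
      rw [hΦshift, map_sub, hP1, hP2]
    have : A (v g₀ y) = ((wg (P (Φ y)) - dx : ↥X) : E) := by
      rw [hAapply, hPfin]
    rw [this, Submodule.coe_sub, hwg, hdxdef]
    rw [hAapply]
  refine ⟨A, hAmem, ?_, ?_⟩
  · intro g y
    have h := hkey g y
    rw [← hDapp]
    rw [h]
    abel
  · intro g x y
    have h := hkey g y
    rw [h, map_add (u g), hDapp]
    abel
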